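/- Let A be a noetherian ring, complete with respect to an ideal I, and let S be a profinite set. If M → N → P is an exact sequence of finitely generated A-modules, then the induced sequence C(S,M) → C(S,N) → C(S,P) of continuous-function modules is exact, where each finitely generated A-module carries its I-adic topology. -/

import Mathlib

set_option linter.unnecessarySimpa false

/-- Telescoping: if consecutive differences lie in `I ^ n • ⊤`, the sequence is Cauchy. -/
lemma my_telescope {A : Type*} [CommRing A] (I : Ideal A) {M : Type*} [AddCommGroup M]
    [Module A M] (f : ℕ → M)
    (h : ∀ n, f (n + 1) - f n ∈ (I ^ n • ⊤ : Submodule A M)) :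
    ∀ {m n : ℕ}, m ≤ n → f n - f m ∈ (I ^ m • ⊤ : Submodule A M) := by
  intro m n hmn
  induction n, hmn using Nat.le_induction with
  | base => simpa using zero_mem _
  | succ n hmn ih =>
      have h1 : f (n + 1) - f n ∈ (I ^ m • ⊤ : Submodule A M) :=
        Submodule.smul_mono_left (Ideal.pow_le_pow_right hmn) (h n)
      have h2 := add_mem h1 ih
      rwa [sub_add_sub_cancel] at h2

lemma my_mem_smul_top_pi {A : Type*} [CommRing A] (J : Ideal A) {n : ℕ} (x : Fin n → A) :
    x ∈ (J • ⊤ : Submodule A (Fin n → A)) ↔ ∀ i, x i ∈ J := by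
  constructor
  · intro hx i
    refine Submodule.smul_induction_on hx (fun r hr m _ => ?_) (fun a b ha hb => ?_)
    · exact J.mul_mem_right _ hr
    · exact J.add_mem ha hb
  · intro hx
    have hrepr : x = ∑ i : Fin n, (x i) • (Pi.single i (1 : A) : Fin n → A) := by
      funext j
      rw [Finset.sum_apply]
      simp [Pi.single_apply, mul_ite]
    rw [hrepr]
    exact Submodule.sum_mem _ fun i _ => Submodule.smul_mem_smul (hx i) trivial

/-- Universe-polymorphic Artin–Rees-type estimate. -/
lemma my_artinRees {A : Type*} [CommRing A] [IsNoetherianRing A] (I : Ideal A)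
    (N : Type*) [AddCommGroup N] [Module A N] [Module.Finite A N] (K : Submodule A N) :
    ∃ k : ℕ, ∀ n : ℕ,
      (I ^ (n + k) • ⊤ : Submodule A N) ⊓ K ≤ I ^ n • K := by
  obtain ⟨m, π, hπ⟩ := Module.Finite.exists_fin' A N
  obtain ⟨k, hk⟩ := Ideal.exists_pow_inf_eq_pow_smul I (K.comap π)
  refine ⟨k, fun n => ?_⟩
  rintro y ⟨hy1, hy2⟩
  have hmap : ∀ j : ℕ, (I ^ j • ⊤ : Submodule A N) =
      Submodule.map π (I ^ j • ⊤ : Submodule A (Fin m → A)) := by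
    intro j
    rw [Submodule.map_smul'', Submodule.map_top, LinearMap.range_eq_top.mpr hπ]
  rw [hmap (n + k)] at hy1
  obtain ⟨x, hx, rfl⟩ := hy1
  have hxK : x ∈ (I ^ (n + k) • ⊤ : Submodule A (Fin m → A)) ⊓ K.comap π := ⟨hx, hy2⟩
  rw [hk (n + k) (Nat.le_add_left k n)] at hxK
  have hle : I ^ (n + k - k) • ((I ^ k • ⊤ : Submodule A (Fin m → A)) ⊓ K.comap π) ≤
      I ^ n • K.comap π := by
    rw [Nat.add_sub_cancel]
    exact Submodule.smul_mono le_rfl inf_le_right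
  have hx2 : x ∈ I ^ n • K.comap π := hle hxK
  have : π x ∈ Submodule.map π (I ^ n • K.comap π) := Submodule.mem_map_of_mem hx2
  rw [Submodule.map_smul''] at this
  exact Submodule.smul_mono le_rfl (Submodule.map_comap_le π K) this

lemma my_isHausdorff {A : Type*} [CommRing A] [IsNoetherianRing A] (I : Ideal A)
    [IsAdicComplete I A] (M : Type*) [AddCommGroup M] [Module A M] [Module.Finite A M] :
    IsHausdorff I M := by
  constructor
  intro x hx
  have hxmem : ∀ j : ℕ, x ∈ (I ^ j • ⊤ : Submodule A M) := fun j => SModEq.zero.mp (hx j)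
  obtain ⟨k, hk⟩ := my_artinRees I M (Submodule.span A {x})
  have h1 : x ∈ I ^ 1 • Submodule.span A ({x} : Set M) :=
    hk 1 ⟨hxmem (1 + k), Submodule.mem_span_singleton_self x⟩
  rw [pow_one] at h1
  obtain ⟨r, hrI, hr⟩ := Submodule.mem_smul_span_singleton.mp h1
  have hj : r ∈ Ideal.jacobson ⊥ := IsAdicComplete.le_jacobson_bot I hrI
  have hu : IsUnit (1 - r) := by
    have h2 := Ideal.mem_jacobson_bot.mp hj (-1)
    have h3 : r * (-1) + 1 = 1 - r := by ring
    rwa [h3] at h2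
  have hz : (1 - r) • x = 0 := by
    rw [sub_smul, one_smul, hr, sub_self]
  exact hu.smul_eq_zero.mp hz

lemma my_isPrecomplete_pi {A : Type*} [CommRing A] (I : Ideal A) [IsPrecomplete I A] (n : ℕ) :
    IsPrecomplete I (Fin n → A) := by
  constructor
  intro f hf
  have hsmul : ∀ (k : ℕ), (I ^ k • ⊤ : Submodule A A) = I ^ k := by
    intro k
    rw [smul_eq_mul, Ideal.mul_top]
  have H : ∀ i : Fin n, ∃ L : A, ∀ k, f k i ≡ L [SMOD (I ^ k • ⊤ : Submodule A A)] := by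
    intro i
    refine IsPrecomplete.prec ‹IsPrecomplete I A› (f := fun k => f k i) ?_
    intro m k hmk
    rw [SModEq.sub_mem, hsmul m]
    have h1 := (SModEq.sub_mem).mp (hf hmk)
    have h2 := (my_mem_smul_top_pi _ _).mp h1 i
    simpa using h2
  choose L hL using H
  refine ⟨L, fun k => ?_⟩
  rw [SModEq.sub_mem, my_mem_smul_top_pi]
  intro i
  have h3 := (SModEq.sub_mem).mp (hL i k)
  rw [hsmul k] at h3
  simpa using h3

lemma my_isPrecomplete {A : Type*} [CommRing A] [IsNoetherianRing A] (I : Ideal A)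
    [IsAdicComplete I A] (M : Type*) [AddCommGroup M] [Module A M] [Module.Finite A M] :
    IsPrecomplete I M := by
  obtain ⟨n, π, hπ⟩ := Module.Finite.exists_fin' A M
  have hpi : IsPrecomplete I (Fin n → A) := my_isPrecomplete_pi I n
  constructor
  intro f hf
  have hmap : ∀ j : ℕ, (I ^ j • ⊤ : Submodule A M) =
      Submodule.map π (I ^ j • ⊤ : Submodule A (Fin n → A)) := by
    intro j
    rw [Submodule.map_smul'', Submodule.map_top, LinearMap.range_eq_top.mpr hπ]
  have step : ∀ (j : ℕ) (x : Fin n → A), π x = f j →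
      ∃ y, π y = f (j + 1) ∧ y - x ∈ (I ^ j • ⊤ : Submodule A (Fin n → A)) := by
    intro j x hx
    have hd : f (j + 1) - f j ∈ (I ^ j • ⊤ : Submodule A M) := by
      have h1 := (SModEq.sub_mem).mp (hf (Nat.le_succ j))
      simpa using neg_mem h1
    rw [hmap j] at hd
    obtain ⟨e, he, hep⟩ := hd
    refine ⟨x + e, ?_, ?_⟩
    · rw [map_add, hx, hep]; abel
    · have h2 : x + e - x = e := by abel
      rw [h2]; exact he
  have base : {y : Fin n → A // π y = f 0} := ⟨(hπ (f 0)).choose, (hπ (f 0)).choose_spec⟩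
  have step' : ∀ (j : ℕ) (p : {y : Fin n → A // π y = f j}),
      {q : {y : Fin n → A // π y = f (j + 1)} //
        q.1 - p.1 ∈ (I ^ j • ⊤ : Submodule A (Fin n → A))} := by
    intro j p
    have h := step j p.1 p.2
    exact ⟨⟨h.choose, h.choose_spec.1⟩, h.choose_spec.2⟩
  let u : ∀ j : ℕ, {y : Fin n → A // π y = f j} :=
    fun j => Nat.rec (motive := fun j => {y : Fin n → A // π y = f j})
      base (fun j p => (step' j p).1) j
  have hdiff : ∀ j : ℕ, (u (j + 1)).1 - (u j).1 ∈ (I ^ j • ⊤ : Submodule A (Fin n → A)) :=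
    fun j => (step' j (u j)).2
  obtain ⟨L, hL⟩ := IsPrecomplete.prec hpi (f := fun j => (u j).1) (by
    intro m j hmj
    rw [SModEq.sub_mem]
    have h1 := my_telescope I (fun j => (u j).1) hdiff hmj
    simpa using neg_mem h1)
  refine ⟨π L, fun j => ?_⟩
  rw [SModEq.sub_mem, ← (u j).2, ← map_sub, hmap j]
  exact Submodule.mem_map_of_mem ((SModEq.sub_mem).mp (hL j))


/-- Let `A` be a noetherian ring, complete with respect to an ideal `I`, and `S` a profinite
set.  If `M → N → P` is an exact sequence of finitely generated `A`-modules, each equipped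
with its `I`-adic topology, then the induced sequence `C(S,M) → C(S,N) → C(S,P)` of
modules of continuous maps is exact: a continuous map `g : S → N` is killed by `β` if and
only if it lifts to a continuous map `S → M`. -/
theorem continuousMap_sequence_exact
    (A : Type*) [CommRing A] [IsNoetherianRing A] (I : Ideal A) [IsAdicComplete I A]
    (S : Type*) [TopologicalSpace S] [CompactSpace S] [T2Space S] [TotallyDisconnectedSpace S]
    (M N P : Type*)
    [AddCommGroup M] [Module A M] [Module.Finite A M]
    [AddCommGroup N] [Module A N] [Module.Finite A N]
    [AddCommGroup P] [Module A P] [Module.Finite A P]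
    [TopologicalSpace M] [IsTopologicalAddGroup M]
    [TopologicalSpace N] [IsTopologicalAddGroup N]
    [TopologicalSpace P] [IsTopologicalAddGroup P]
    (hM : ∀ t : Set M, t ∈ nhds (0 : M) ↔ ∃ n : ℕ, ((I ^ n • ⊤ : Submodule A M) : Set M) ⊆ t)
    (hN : ∀ t : Set N, t ∈ nhds (0 : N) ↔ ∃ n : ℕ, ((I ^ n • ⊤ : Submodule A N) : Set N) ⊆ t)
    (hP : ∀ t : Set P, t ∈ nhds (0 : P) ↔ ∃ n : ℕ, ((I ^ n • ⊤ : Submodule A P) : Set P) ⊆ t)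
    (α : M →ₗ[A] N) (β : N →ₗ[A] P) (hexact : Function.Exact α β) :
    ∀ g : C(S, N), (∀ s, β (g s) = 0) ↔ ∃ f : C(S, M), ∀ s, α (f s) = g s := by
  classical
  have hMc : IsPrecomplete I M := my_isPrecomplete I M
  have hNh : IsHausdorff I N := my_isHausdorff I N
  intro g
  constructor
  swap
  · rintro ⟨f, hf⟩ s
    rw [← hf s]
    exact hexact.apply_apply_eq_zero (f s)
  intro hg
  have hgK : ∀ s, g s ∈ LinearMap.range α := by
    intro s
    obtain ⟨x, hx⟩ := (hexact (g s)).mp (hg s)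
    exact ⟨x, hx⟩
  -- cosets of `I ^ n • ⊤` are open
  have openCosetN : ∀ (n : ℕ) (x : N),
      IsOpen {y : N | y - x ∈ (I ^ n • ⊤ : Submodule A N)} := by
    intro n x
    have hopen : IsOpen ((I ^ n • ⊤ : Submodule A N) : Set N) := by
      apply AddSubgroup.isOpen_of_mem_nhds (I ^ n • ⊤ : Submodule A N).toAddSubgroup
      exact (hN _).mpr ⟨n, subset_rfl⟩
    exact hopen.preimage (continuous_id.sub continuous_const)
  -- reduction mod `I ^ n • ⊤` of a continuous map is locally constant
  have lcN : ∀ (h : S → N), Continuous h → ∀ (n : ℕ),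
      IsLocallyConstant fun s =>
        Submodule.Quotient.mk (p := (I ^ n • ⊤ : Submodule A N)) (h s) := by
    intro h hc n
    rw [IsLocallyConstant.iff_exists_open]
    intro s0
    refine ⟨h ⁻¹' {y | y - h s0 ∈ (I ^ n • ⊤ : Submodule A N)},
      (openCosetN n (h s0)).preimage hc, ?_, ?_⟩
    · show h s0 - h s0 ∈ (I ^ n • ⊤ : Submodule A N)
      simp
    · intro s hs
      exact (Submodule.Quotient.eq _).mpr hs
  -- Artin–Rees strictness
  obtain ⟨k, hk⟩ := my_artinRees I N (LinearMap.range α)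
  have hstrict : ∀ (n : ℕ) (y : N), y ∈ LinearMap.range α →
      y ∈ (I ^ (n + k) • ⊤ : Submodule A N) →
      ∃ x ∈ (I ^ n • ⊤ : Submodule A M), α x = y := by
    intro n y hy1 hy2
    have h1 : y ∈ I ^ n • LinearMap.range α := hk n ⟨hy2, hy1⟩
    rw [← Submodule.map_top, ← Submodule.map_smul''] at h1
    obtain ⟨x, hx, hxy⟩ := h1
    exact ⟨x, hx, hxy⟩
  -- base of the recursion
  have hbase : ∃ u : S → M, IsLocallyConstant u ∧
      ∀ s, g s - α (u s) ∈ (I ^ (0 + k) • ⊤ : Submodule A N) := by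
    set q : N → N ⧸ (I ^ (0 + k) • ⊤ : Submodule A N) := Submodule.Quotient.mk with hq
    have hv : IsLocallyConstant fun s => q (g s) := lcN g g.continuous (0 + k)
    set σ : (N ⧸ (I ^ (0 + k) • ⊤ : Submodule A N)) → M := fun x =>
      if h : ∃ m : M, q (α m) = x then h.choose else 0 with hσdef
    refine ⟨σ ∘ fun s => q (g s), hv.comp σ, ?_⟩
    intro s
    obtain ⟨m, hm⟩ := hgK s
    have hex : ∃ m' : M, q (α m') = q (g s) := ⟨m, by rw [hm]⟩
    have h1 : q (α (σ (q (g s)))) = q (g s) := by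
      simp only [hσdef, dif_pos hex]
      exact hex.choose_spec
    exact (Submodule.Quotient.eq _).mp h1.symm
  -- step of the recursion
  have hstep : ∀ (n : ℕ) (u : S → M), IsLocallyConstant u →
      (∀ s, g s - α (u s) ∈ (I ^ (n + k) • ⊤ : Submodule A N)) →
      ∃ w : S → M, (IsLocallyConstant w ∧
        ∀ s, g s - α (w s) ∈ (I ^ (n + 1 + k) • ⊤ : Submodule A N)) ∧
        ∀ s, w s - u s ∈ (I ^ n • ⊤ : Submodule A M) := by
    intro n u hu happ
    set d : S → N := fun s => g s - α (u s) with hd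
    have hdc : Continuous d := g.continuous.sub (hu.comp (α : M → N)).continuous
    have hdr : ∀ s, d s ∈ LinearMap.range α := fun s =>
      sub_mem (hgK s) (LinearMap.mem_range_self α (u s))
    set q : N → N ⧸ (I ^ (n + 1 + k) • ⊤ : Submodule A N) := Submodule.Quotient.mk with hq
    have hv : IsLocallyConstant fun s => q (d s) := lcN d hdc (n + 1 + k)
    set σ : (N ⧸ (I ^ (n + 1 + k) • ⊤ : Submodule A N)) → M := fun x =>
      if h : ∃ m ∈ (I ^ n • ⊤ : Submodule A M), q (α m) = x then h.choose else 0 with hσdef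
    have hσ : ∀ s, σ (q (d s)) ∈ (I ^ n • ⊤ : Submodule A M) ∧
        q (α (σ (q (d s)))) = q (d s) := by
      intro s
      have hex : ∃ m ∈ (I ^ n • ⊤ : Submodule A M), q (α m) = q (d s) := by
        obtain ⟨x, hx, hxy⟩ := hstrict n (d s) (hdr s) (happ s)
        exact ⟨x, hx, by rw [hxy]⟩
      simp only [hσdef, dif_pos hex]
      exact ⟨hex.choose_spec.1, hex.choose_spec.2⟩
    refine ⟨fun s => u s + σ (q (d s)),
      ⟨hu.comp₂ (hv.comp σ) (· + ·), fun s => ?_⟩, fun s => ?_⟩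
    · have h2 : d s - α (σ (q (d s))) ∈ (I ^ (n + 1 + k) • ⊤ : Submodule A N) :=
        (Submodule.Quotient.eq _).mp (hσ s).2.symm
      have he : g s - α (u s + σ (q (d s))) = d s - α (σ (q (d s))) := by
        simp only [hd, map_add]
        abel
      rw [he]; exact h2
    · have he : u s + σ (q (d s)) - u s = σ (q (d s)) := by abel
      rw [he]; exact (hσ s).1
  -- the recursion
  have base' : {u : S → M // IsLocallyConstant u ∧
      ∀ s, g s - α (u s) ∈ (I ^ (0 + k) • ⊤ : Submodule A N)} :=
    ⟨hbase.choose, hbase.choose_spec⟩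
  have step' : ∀ (n : ℕ) (p : {u : S → M // IsLocallyConstant u ∧
      ∀ s, g s - α (u s) ∈ (I ^ (n + k) • ⊤ : Submodule A N)}),
      {w : {u : S → M // IsLocallyConstant u ∧
        ∀ s, g s - α (u s) ∈ (I ^ (n + 1 + k) • ⊤ : Submodule A N)} //
        ∀ s, w.1 s - p.1 s ∈ (I ^ n • ⊤ : Submodule A M)} := by
    intro n p
    have h := hstep n p.1 p.2.1 p.2.2
    exact ⟨⟨h.choose, h.choose_spec.1⟩, h.choose_spec.2⟩
  let u : ∀ n : ℕ, {u : S → M // IsLocallyConstant u ∧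
      ∀ s, g s - α (u s) ∈ (I ^ (n + k) • ⊤ : Submodule A N)} :=
    fun n => Nat.rec (motive := fun n => {u : S → M // IsLocallyConstant u ∧
      ∀ s, g s - α (u s) ∈ (I ^ (n + k) • ⊤ : Submodule A N)})
      base' (fun n p => (step' n p).1) n
  have hdiff : ∀ (n : ℕ) (s : S),
      (u (n + 1)).1 s - (u n).1 s ∈ (I ^ n • ⊤ : Submodule A M) :=
    fun n => (step' n (u n)).2
  -- take limits pointwise
  have hcau : ∀ (s : S) {m n : ℕ}, m ≤ n →
      (u m).1 s ≡ (u n).1 s [SMOD (I ^ m • ⊤ : Submodule A M)] := by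
    intro s m n hmn
    rw [SModEq.sub_mem]
    have h1 := my_telescope I (fun j => (u j).1 s) (fun j => hdiff j s) hmn
    simpa using neg_mem h1
  have hlim : ∀ s : S, ∃ L : M, ∀ n, (u n).1 s ≡ L [SMOD (I ^ n • ⊤ : Submodule A M)] :=
    fun s => IsPrecomplete.prec hMc (hcau s)
  choose f hf using hlim
  -- the limit lifts g
  have hαf : ∀ s, α (f s) = g s := by
    intro s
    have hz : g s - α (f s) = 0 := by
      refine hNh.haus _ fun n => ?_
      rw [SModEq.zero]
      have h1 : g s - α ((u n).1 s) ∈ (I ^ n • ⊤ : Submodule A N) :=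
        Submodule.smul_mono_left (Ideal.pow_le_pow_right (Nat.le_add_right n k)) ((u n).2.2 s)
      have h2 : (u n).1 s - f s ∈ (I ^ n • ⊤ : Submodule A M) :=
        (SModEq.sub_mem).mp (hf s n)
      have h3 : α ((u n).1 s - f s) ∈ (I ^ n • ⊤ : Submodule A N) := by
        have h4 : α ((u n).1 s - f s) ∈ Submodule.map α (I ^ n • ⊤ : Submodule A M) :=
          Submodule.mem_map_of_mem h2
        rw [Submodule.map_smul''] at h4
        exact Submodule.smul_mono le_rfl le_top h4
      have h5 := add_mem h1 h3
      have he : g s - α ((u n).1 s) + α ((u n).1 s - f s) = g s - α (f s) := by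
        rw [map_sub]; abel
      rwa [he] at h5
    exact (sub_eq_zero.mp hz).symm
  -- the limit is continuous
  have hfc : Continuous f := by
    rw [continuous_iff_continuousAt]
    intro s0
    rw [ContinuousAt, Filter.tendsto_def]
    intro t ht
    have ht0 : (fun y : M => y + f s0) ⁻¹' t ∈ nhds (0 : M) := by
      have hc : ContinuousAt (fun y : M => y + f s0) 0 :=
        (continuous_id.add continuous_const).continuousAt
      exact hc.preimage_mem_nhds (by simpa using ht)
    obtain ⟨n, hn⟩ := (hM _).mp ht0
    have hUopen : IsOpen {s : S |
        Submodule.Quotient.mk (p := (I ^ n • ⊤ : Submodule A M)) ((u n).1 s) =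
          Submodule.Quotient.mk ((u n).1 s0)} :=
      ((u n).2.1.comp (Submodule.Quotient.mk (p := (I ^ n • ⊤ : Submodule A M)))).isOpen_fiber _
    refine Filter.mem_of_superset (hUopen.mem_nhds rfl) ?_
    intro s hs
    have h1 : (u n).1 s - (u n).1 s0 ∈ (I ^ n • ⊤ : Submodule A M) :=
      (Submodule.Quotient.eq _).mp hs
    have h2 : f s - (u n).1 s ∈ (I ^ n • ⊤ : Submodule A M) := by
      simpa using neg_mem ((SModEq.sub_mem).mp (hf s n))
    have h3 : (u n).1 s0 - f s0 ∈ (I ^ n • ⊤ : Submodule A M) :=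
      (SModEq.sub_mem).mp (hf s0 n)
    have hm' : f s - f s0 ∈ (I ^ n • ⊤ : Submodule A M) := by
      have h4 := add_mem (add_mem h2 h1) h3
      have he : f s - (u n).1 s + ((u n).1 s - (u n).1 s0) + ((u n).1 s0 - f s0) =
          f s - f s0 := by abel
      rwa [he] at h4
    have h5 := hn hm'
    simpa using h5
  exact ⟨⟨f, hfc⟩, hαf⟩
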